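/- Let c = gcd(n,k) and l = n/c with l odd. Then the set S consisting of {v_{j+ik} : 0 ≤ i ≤ l−1, 0 ≤ j ≤ c−1, i odd} together with {u_{c−1}} ∪ {u_j : 0 ≤ j ≤ c−1, j even} is a P3-hull set of G(n,k) of cardinality ⌈(n+1)/2⌉. -/

import Mathlib

open SimpleGraph
open Fin.NatCast

def infectStep {V : Type*} (G : SimpleGraph V) (S : Set V) : Set V :=
  S ∪ {v | ∃ a b, a ≠ b ∧ a ∈ S ∧ b ∈ S ∧ G.Adj v a ∧ G.Adj v b}

def infectIter {V : Type*} (G : SimpleGraph V) (S : Set V) : ℕ → Set V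
  | 0 => S
  | p + 1 => infectStep G (infectIter G S p)

def IsHullSet {V : Type*} (G : SimpleGraph V) (S : Set V) : Prop :=
  ∃ p, infectIter G S p = Set.univ

noncomputable def hullNumber {V : Type*} (G : SimpleGraph V) : ℕ :=
  sInf {m | ∃ S : Set V, S.ncard = m ∧ IsHullSet G S}

noncomputable def infectTime {V : Type*} (G : SimpleGraph V) (S : Set V) : ℕ :=
  sInf {p | infectIter G S p = Set.univ}

def IsCubic {V : Type*} (G : SimpleGraph V) : Prop :=
  ∀ v, {w | G.Adj v w}.ncard = 3

def IsDecyclingSet {V : Type*} (G : SimpleGraph V) (S : Set V) : Prop :=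
  (G.induce Sᶜ).IsAcyclic

noncomputable def decyclingNumber {V : Type*} (G : SimpleGraph V) : ℕ :=
  sInf {m | ∃ S : Set V, S.ncard = m ∧ IsDecyclingSet G S}

def pHull {V : Type*} (G : SimpleGraph V) (S : Set V) : Set V :=
  ⋃ p, infectIter G S p

noncomputable def graphDiam {V : Type*} (G : SimpleGraph V) : ℕ :=
  sSup {d | ∃ a b, d = G.dist a b}

noncomputable def maxCompDiam {V : Type*} (G : SimpleGraph V) : ℕ :=
  sSup {d | ∃ c : G.ConnectedComponent, d = graphDiam (G.induce c.supp)}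

def genPetersen (n k : ℕ) [NeZero n] : SimpleGraph (Fin n ⊕ Fin n) :=
  SimpleGraph.fromRel fun x y =>
    match x, y with
    | Sum.inl i, Sum.inl j => j = i + 1
    | Sum.inl i, Sum.inr j => i = j
    | Sum.inr i, Sum.inr j => j = i + (k : Fin n)
    | _, _ => False

def Sv (n k : ℕ) [NeZero n] : Set (Fin n ⊕ Fin n) :=
  {x | ∃ i j : ℕ, i < n / Nat.gcd n k ∧ j < Nat.gcd n k ∧ Odd i ∧
    x = Sum.inr ((j + i * k : ℕ) : Fin n)}

def SuOdd (n c : ℕ) [NeZero n] : Set (Fin n ⊕ Fin n) :=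
  {Sum.inl ((c - 1 : ℕ) : Fin n)} ∪
    {x | ∃ j : ℕ, j < c ∧ Even j ∧ x = Sum.inl ((j : ℕ) : Fin n)}

set_option linter.unusedSectionVars false
set_option linter.unusedVariables false
section gen
variable {V : Type*} {G : SimpleGraph V} {S : Set V}

lemma infectIter_mono {p q : ℕ} (h : p ≤ q) : infectIter G S p ⊆ infectIter G S q := by
  induction q with
  | zero => simp_all
  | succ q ih =>
    rcases Nat.lt_or_ge p (q+1) with h'|h'
    · exact (ih (Nat.lt_succ_iff.mp h')).trans (Set.subset_union_left)
    · have : p = q + 1 := le_antisymm h h'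
      subst this; rfl

lemma mem_step {p : ℕ} {v a b : V} (hab : a ≠ b) (ha : a ∈ infectIter G S p)
    (hb : b ∈ infectIter G S p) (h1 : G.Adj v a) (h2 : G.Adj v b) :
    v ∈ infectIter G S (p + 1) :=
  Or.inr ⟨a, b, hab, ha, hb, h1, h2⟩

lemma isHullSet_of_forall [Fintype V] (h : ∀ v, ∃ p, v ∈ infectIter G S p) :
    IsHullSet G S := by
  choose f hf using h
  refine ⟨Finset.univ.sup f, Set.eq_univ_of_forall fun v => ?_⟩
  exact infectIter_mono (Finset.le_sup (Finset.mem_univ v)) (hf v)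

end gen

section adj
variable {n k : ℕ} [NeZero n]

lemma adj_spoke (a : Fin n) : (genPetersen n k).Adj (Sum.inl a) (Sum.inr a) := by
  simp [genPetersen, SimpleGraph.fromRel_adj]

lemma adj_outer {a b : Fin n} (h : a ≠ b) (h2 : b = a + 1 ∨ a = b + 1) :
    (genPetersen n k).Adj (Sum.inl a) (Sum.inl b) := by
  simp only [genPetersen, SimpleGraph.fromRel_adj]
  exact ⟨by simpa using h, h2⟩

lemma adj_inner {a b : Fin n} (h : a ≠ b) (h2 : b = a + (k : Fin n) ∨ a = b + (k : Fin n)) :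
    (genPetersen n k).Adj (Sum.inr a) (Sum.inr b) := by
  simp only [genPetersen, SimpleGraph.fromRel_adj]
  exact ⟨by simpa using h, h2⟩

end adj


section nt
variable {n k : ℕ} [NeZero n] (hk1 : 1 ≤ k) (hk2 : 2 * k < n)

local notation "c" => Nat.gcd n k
local notation "l" => n / Nat.gcd n k

lemma cast_inj_lt {a b : ℕ} (ha : a < n) (hb : b < n) (h : ((a : ℕ) : Fin n) = b) : a = b := by
  have := congrArg Fin.val h
  simpa [Fin.val_natCast, Nat.mod_eq_of_lt ha, Nat.mod_eq_of_lt hb] using this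

include hk1 in
lemma c_pos : 0 < c := Nat.gcd_pos_of_pos_right n hk1

lemma n_eq_cl : n = c * l := (Nat.mul_div_cancel' (Nat.gcd_dvd_left n k)).symm

include hk1 hk2 in
lemma l_ge_three : 3 ≤ l := by
  have hc : c ∣ k := Nat.gcd_dvd_right n k
  have hck : c ≤ k := Nat.le_of_dvd hk1 hc
  have hn := n_eq_cl (n := n) (k := k)
  have hcpos := c_pos (n := n) hk1
  by_contra h
  interval_cases hl : l <;> omega

-- uniqueness half, with ordering
include hk1 in
lemma key1_aux {i i' j : ℕ} (hi : i < l) (hii : i' ≤ i)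
    (h : Nat.ModEq n (j + i * k) (j + i' * k)) : i = i' := by
  have h2 : Nat.ModEq n (i * k) (i' * k) := h.add_left_cancel' j
  have h3 : n ∣ i * k - i' * k := (Nat.modEq_iff_dvd' (Nat.mul_le_mul_right k hii)).mp h2.symm
  rw [← Nat.sub_mul] at h3
  have hck : c ∣ k := Nat.gcd_dvd_right n k
  have hn := n_eq_cl (n := n) (k := k)
  have hcpos := c_pos (n := n) hk1
  have h4 : l ∣ (i - i') * (k / c) := by
    have h3' : c * l ∣ c * ((i - i') * (k / c)) := by
      have hkk : (i - i') * k = c * ((i - i') * (k / c)) := by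
        rw [mul_left_comm, Nat.mul_div_cancel' hck]
      rw [← hkk, ← hn]; exact h3
    exact (mul_dvd_mul_iff_left hcpos.ne').mp h3'
  have hcop : Nat.Coprime l (k / c) := Nat.coprime_div_gcd_div_gcd hcpos
  have h5 : l ∣ i - i' := (Nat.Coprime.dvd_of_dvd_mul_right hcop) h4
  have h6 : i - i' = 0 := Nat.eq_zero_of_dvd_of_lt h5 (lt_of_le_of_lt (Nat.sub_le i i') hi)
  omega

include hk1 in
lemma key1 {i i' j j' : ℕ} (hi : i < l) (hi' : i' < l) (hj : j < c) (hj' : j' < c)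
    (h : ((j + i * k : ℕ) : Fin n) = ((j' + i' * k : ℕ) : Fin n)) : i = i' ∧ j = j' := by
  have hmod : Nat.ModEq n (j + i * k) (j' + i' * k) := by
    have := congrArg Fin.val h
    simp only [Fin.val_natCast] at this
    exact this
  have hck : c ∣ k := Nat.gcd_dvd_right n k
  have hcn : c ∣ n := Nat.gcd_dvd_left n k
  have hmodc : Nat.ModEq c (j + i * k) (j' + i' * k) := hmod.of_dvd hcn
  have hj0 : Nat.ModEq c j j' := by
    have h1 : Nat.ModEq c (i * k) 0 := (Nat.modEq_zero_iff_dvd).mpr (Dvd.dvd.mul_left hck i)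
    have h2 : Nat.ModEq c (i' * k) 0 := (Nat.modEq_zero_iff_dvd).mpr (Dvd.dvd.mul_left hck i')
    calc j ≡ j + i * k [MOD c] := by simpa using (Nat.ModEq.refl j).add h1.symm
      _ ≡ j' + i' * k [MOD c] := hmodc
      _ ≡ j' [MOD c] := by simpa using (Nat.ModEq.refl j').add h2
  have hjj : j = j' := by
    have := hj0
    unfold Nat.ModEq at this
    rwa [Nat.mod_eq_of_lt hj, Nat.mod_eq_of_lt hj'] at this
  subst hjj
  rcases le_total i' i with hle | hle
  · exact ⟨key1_aux hk1 hi hle hmod, rfl⟩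
  · exact ⟨(key1_aux hk1 hi' hle hmod.symm).symm, rfl⟩

include hk1 in
lemma key2 (m : Fin n) : ∃ i j : ℕ, i < l ∧ j < c ∧ m = ((j + i * k : ℕ) : Fin n) := by
  have hcpos := c_pos (n := n) hk1
  have hn := n_eq_cl (n := n) (k := k)
  let e : Fin l × Fin c → Fin n := fun p => ((p.2.val + p.1.val * k : ℕ) : Fin n)
  have hinj : Function.Injective e := by
    rintro ⟨i, j⟩ ⟨i', j'⟩ hh
    obtain ⟨h1, h2⟩ := key1 hk1 i.isLt i'.isLt j.isLt j'.isLt hh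
    simp [Prod.ext_iff, Fin.ext_iff, h1, h2]
  have hcard : Fintype.card (Fin l × Fin c) = Fintype.card (Fin n) := by
    simp [mul_comm, ← hn]
  have hbij : Function.Bijective e :=
    (Fintype.bijective_iff_injective_and_card e).mpr ⟨hinj, hcard⟩
  obtain ⟨⟨i, j⟩, hij⟩ := hbij.surjective m
  exact ⟨i, j, i.isLt, j.isLt, hij.symm⟩

end nt

section infect
variable {n k : ℕ} [NeZero n] (hk1 : 1 ≤ k) (hk2 : 2 * k < n)
  (hl : Odd (n / Nat.gcd n k))

local notation "c" => Nat.gcd n k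
local notation "l" => n / Nat.gcd n k
local notation "G" => genPetersen n k
local notation "S" => Sv n k ∪ SuOdd n (Nat.gcd n k)

include hk1 in
lemma repr_ne {i i' j j' : ℕ} (hi : i < l) (hi' : i' < l) (hj : j < c) (hj' : j' < c)
    (hne : i ≠ i' ∨ j ≠ j') : ((j + i * k : ℕ) : Fin n) ≠ ((j' + i' * k : ℕ) : Fin n) := by
  intro h
  obtain ⟨h1, h2⟩ := key1 hk1 hi hi' hj hj' h
  tauto

lemma adj_inner_nat {a b : ℕ} (h : b = a + k ∨ a = b + k)
    (hne : ((a : ℕ) : Fin n) ≠ ((b : ℕ) : Fin n)) :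
    (genPetersen n k).Adj (Sum.inr ((a : ℕ) : Fin n)) (Sum.inr ((b : ℕ) : Fin n)) := by
  apply adj_inner hne
  rcases h with h | h <;> [left; right] <;> subst h <;> push_cast <;> ring

lemma adj_outer_nat {a b : ℕ} (h : b = a + 1 ∨ a = b + 1)
    (hne : ((a : ℕ) : Fin n) ≠ ((b : ℕ) : Fin n)) :
    (genPetersen n k).Adj (Sum.inl ((a : ℕ) : Fin n)) (Sum.inl ((b : ℕ) : Fin n)) := by
  apply adj_outer hne
  rcases h with h | h <;> [left; right] <;> subst h <;> push_cast <;> ring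

lemma mem0 {i j : ℕ} (hi : i < l) (hj : j < c) (hoi : Odd i) :
    (Sum.inr ((j + i * k : ℕ) : Fin n) : Fin n ⊕ Fin n) ∈ S :=
  Or.inl ⟨i, j, hi, hj, hoi, rfl⟩

include hk1 hk2 in
lemma L1a {i j : ℕ} (hi : i < l) (hj : j < c) (hei : Even i) (hi0 : i ≠ 0)
    (hil : i ≠ l - 1) :
    (Sum.inr ((j + i * k : ℕ) : Fin n) : Fin n ⊕ Fin n) ∈ infectIter G S 1 := by
  have hl3 := l_ge_three (n := n) (k := k) hk1 hk2
  have hi2 : 2 ≤ i := by rcases hei with ⟨t, ht⟩; omega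
  have him : i - 1 < l := by omega
  have hip : i + 1 < l := by omega
  refine mem_step (a := Sum.inr ((j + (i-1) * k : ℕ) : Fin n))
    (b := Sum.inr ((j + (i+1) * k : ℕ) : Fin n)) ?_ ?_ ?_ ?_ ?_
  · intro h
    exact repr_ne hk1 him hip hj hj (Or.inl (by omega)) (Sum.inr.inj h)
  · exact mem0 him hj (Nat.Even.sub_odd (by omega) hei odd_one)
  · exact mem0 hip hj (Even.add_one hei)
  · have h1 : j + i * k = (j + (i-1) * k) + k := by
      obtain ⟨t, rfl⟩ : ∃ t, i = t + 1 := ⟨i - 1, by omega⟩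
      simp only [Nat.add_sub_cancel, add_mul, one_mul]
      omega
    exact adj_inner_nat (Or.inr h1) (repr_ne hk1 hi him hj hj (Or.inl (by omega)))
  · have h1 : j + (i+1) * k = (j + i * k) + k := by ring
    exact adj_inner_nat (Or.inl h1) (repr_ne hk1 hi hip hj hj (Or.inl (by omega)))

include hk1 in
lemma c_le_n : c ≤ n := Nat.le_of_dvd (Nat.pos_of_ne_zero (NeZero.ne n)) (Nat.gcd_dvd_left n k)

include hk1 hk2 in
lemma L1b {j : ℕ} (hj : j < c) :
    (Sum.inl ((j : ℕ) : Fin n) : Fin n ⊕ Fin n) ∈ infectIter G S 1 := by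
  have hcn := c_le_n (n := n) (k := k) hk1
  have hn3 : 3 ≤ n := by omega
  rcases Nat.even_or_odd j with hej | hoj
  · exact infectIter_mono (Nat.zero_le 1) (Or.inr (Or.inr ⟨j, hj, hej, rfl⟩))
  · by_cases hjc : j = c - 1
    · subst hjc
      exact infectIter_mono (Nat.zero_le 1) (Or.inr (Or.inl rfl))
    · have hj1 : 1 ≤ j := hoj.pos
      have hjc2 : j + 1 < c := by omega
      refine mem_step (a := Sum.inl ((j - 1 : ℕ) : Fin n))
        (b := Sum.inl ((j + 1 : ℕ) : Fin n)) ?_ ?_ ?_ ?_ ?_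
      · intro h
        have := cast_inj_lt (n := n) (by omega) (by omega) (Sum.inl.inj h)
        omega
      · exact Or.inr (Or.inr ⟨j - 1, by omega, Nat.Odd.sub_odd hoj odd_one, rfl⟩)
      · exact Or.inr (Or.inr ⟨j + 1, hjc2, Odd.add_one hoj, rfl⟩)
      · refine adj_outer_nat (a := j) (b := j - 1) (Or.inr (by omega)) ?_
        intro h
        have := cast_inj_lt (n := n) (by omega) (by omega) h
        omega
      · refine adj_outer_nat (Or.inl rfl) ?_
        intro h
        have := cast_inj_lt (n := n) (by omega) (by omega) h
        omega

include hk1 hk2 in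
lemma L2 {j : ℕ} (hj : j < c) :
    (Sum.inr ((j : ℕ) : Fin n) : Fin n ⊕ Fin n) ∈ infectIter G S 2 := by
  have hl3 := l_ge_three (n := n) (k := k) hk1 hk2
  have hrw : ((j : ℕ) : Fin n) = ((j + 0 * k : ℕ) : Fin n) := by norm_num
  refine mem_step (a := Sum.inl ((j : ℕ) : Fin n))
    (b := Sum.inr ((j + 1 * k : ℕ) : Fin n)) (by simp) (L1b hk1 hk2 hj)
    (infectIter_mono (Nat.zero_le 1) (mem0 (by omega) hj odd_one)) ((adj_spoke _).symm) ?_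
  rw [hrw]
  refine adj_inner_nat (Or.inl (by ring)) ?_
  exact repr_ne hk1 (by omega) (by omega) hj hj (Or.inl (by omega))

include hk1 hk2 hl in
lemma L3 {j : ℕ} (hj : j < c) :
    (Sum.inr ((j + (l - 1) * k : ℕ) : Fin n) : Fin n ⊕ Fin n) ∈ infectIter G S 3 := by
  have hl3 := l_ge_three (n := n) (k := k) hk1 hk2
  have hcpos := c_pos (n := n) (k := k) hk1
  have hlk : ((j + (l - 1) * k : ℕ) : Fin n) + (k : Fin n) = ((j : ℕ) : Fin n) := by
    rw [show ((j + (l - 1) * k : ℕ) : Fin n) + (k : Fin n)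
        = ((j + (l - 1) * k + k : ℕ) : Fin n) by push_cast; ring]
    have h1 : (l - 1) * k + k = l * k := by
      rw [Nat.sub_mul, one_mul]
      have : k ≤ l * k := Nat.le_mul_of_pos_left k (by omega)
      omega
    have h2 : l * k = n * (k / c) := by
      have hck : c ∣ k := Nat.gcd_dvd_right n k
      have hcn : c ∣ n := Nat.gcd_dvd_left n k
      calc l * k = l * (c * (k / c)) := by rw [Nat.mul_div_cancel' hck]
        _ = (l * c) * (k / c) := by ring
        _ = n * (k / c) := by rw [mul_comm (l) c, Nat.mul_div_cancel' hcn]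
    have h3 : j + (l - 1) * k + k = j + n * (k / c) := by omega
    rw [h3]
    push_cast [Fin.natCast_self]
    simp
  refine mem_step (a := Sum.inr ((j + (l - 2) * k : ℕ) : Fin n))
    (b := Sum.inr ((j : ℕ) : Fin n)) ?_ ?_ (L2 hk1 hk2 hj) ?_ ?_
  · intro h
    have hrw : ((j : ℕ) : Fin n) = ((j + 0 * k : ℕ) : Fin n) := by norm_num
    rw [hrw] at h
    exact repr_ne (i := l - 2) (i' := 0) hk1 (by omega) (by omega) hj hj
      (Or.inl (by omega)) (Sum.inr.inj h)
  · refine infectIter_mono (Nat.zero_le 2) (mem0 (i := l - 2) (by omega) hj ?_)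
    exact Nat.Odd.sub_even (by omega) hl (by norm_num)
  · refine adj_inner_nat (Or.inr ?_)
      (repr_ne (i := l - 1) (i' := l - 2) hk1 (by omega) (by omega) hj hj (Or.inl (by omega)))
    have he : (l - 1) * k = (l - 2) * k + k := by
      rw [Nat.sub_mul, Nat.sub_mul, one_mul]
      have : 2 * k ≤ l * k := Nat.mul_le_mul_right k (by omega)
      omega
    omega
  · refine adj_inner ?_ (Or.inl hlk.symm)
    intro h
    have hrw : ((j : ℕ) : Fin n) = ((j + 0 * k : ℕ) : Fin n) := by norm_num
    rw [hrw] at h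
    exact repr_ne (i := l - 1) (i' := 0) hk1 (by omega) (by omega) hj hj (Or.inl (by omega)) h

include hk1 hk2 hl in
lemma L4 (m : Fin n) : (Sum.inr m : Fin n ⊕ Fin n) ∈ infectIter G S 3 := by
  have hl3 := l_ge_three (n := n) (k := k) hk1 hk2
  obtain ⟨i, j, hi, hj, hm⟩ := key2 hk1 m
  subst hm
  rcases Nat.even_or_odd i with hei | hoi
  · by_cases hi0 : i = 0
    · subst hi0
      have : ((j + 0 * k : ℕ) : Fin n) = ((j : ℕ) : Fin n) := by norm_num
      rw [this]
      exact infectIter_mono (by omega) (L2 hk1 hk2 hj)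
    · by_cases hil : i = l - 1
      · subst hil
        exact L3 hk1 hk2 hl hj
      · exact infectIter_mono (by omega) (L1a hk1 hk2 hi hj hei hi0 hil)
  · exact infectIter_mono (Nat.zero_le 3) (mem0 hi hj hoi)

include hk1 hk2 hl in
lemma L5 (m : ℕ) (hm : m < n) :
    (Sum.inl ((m : ℕ) : Fin n) : Fin n ⊕ Fin n) ∈ infectIter G S (4 + m) := by
  induction m with
  | zero =>
    exact infectIter_mono (by omega) (L1b hk1 hk2 (c_pos (n := n) hk1))
  | succ m ih =>
    by_cases hmc : m + 1 < c
    · exact infectIter_mono (by omega) (L1b hk1 hk2 hmc)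
    · refine mem_step (a := Sum.inl ((m : ℕ) : Fin n))
        (b := Sum.inr ((m + 1 : ℕ) : Fin n)) (by simp) (ih (by omega))
        (infectIter_mono (by simp only [Nat.add_eq]; omega) (L4 hk1 hk2 hl _)) ?_ (adj_spoke _)
      refine adj_outer_nat (Or.inr rfl) ?_
      intro h
      have := cast_inj_lt (n := n) (by omega) (by omega) h
      omega

include hk1 hk2 hl in
lemma hull_main : IsHullSet G S := by
  apply isHullSet_of_forall
  rintro (a | a)
  · exact ⟨4 + a.val, by simpa [Fin.cast_val_eq_self] using L5 hk1 hk2 hl a.val a.isLt⟩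
  · exact ⟨3, L4 hk1 hk2 hl a⟩

end infect

section card
variable {n k : ℕ} [NeZero n]

lemma card_even_range (m : ℕ) :
    ((Finset.range m).filter (fun j => Even j)).card = (m + 1) / 2 := by
  induction m with
  | zero => simp
  | succ m ih =>
    rw [Finset.range_add_one, Finset.filter_insert]
    by_cases h : Even m
    · rw [if_pos h, Finset.card_insert_of_notMem (by simp), ih]
      rcases h with ⟨r, hr⟩; omega
    · rw [if_neg h, ih]
      have := Nat.not_even_iff.mp h; omega

lemma card_odd_range (m : ℕ) :
    ((Finset.range m).filter (fun j => Odd j)).card = m / 2 := by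
  induction m with
  | zero => simp
  | succ m ih =>
    rw [Finset.range_add_one, Finset.filter_insert]
    by_cases h : Odd m
    · rw [if_pos h, Finset.card_insert_of_notMem (by simp), ih]
      rcases h with ⟨r, hr⟩; omega
    · rw [if_neg h, ih]
      have := Nat.not_odd_iff.mp h; omega

lemma Sv_eq (hk1 : 1 ≤ k) : Sv n k =
    ↑((((Finset.range (n / Nat.gcd n k)).filter (fun i => Odd i)) ×ˢ
        Finset.range (Nat.gcd n k)).image
      (fun p => (Sum.inr ((p.2 + p.1 * k : ℕ) : Fin n) : Fin n ⊕ Fin n))) := by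
  ext x
  simp only [Sv, Set.mem_setOf_eq, Finset.coe_image, Set.mem_image, Finset.mem_coe,
    Finset.mem_product, Finset.mem_filter, Finset.mem_range]
  constructor
  · rintro ⟨i, j, hi, hj, hoi, rfl⟩
    exact ⟨⟨i, j⟩, ⟨⟨hi, hoi⟩, hj⟩, rfl⟩
  · rintro ⟨⟨i, j⟩, ⟨⟨hi, hoi⟩, hj⟩, rfl⟩
    exact ⟨i, j, hi, hj, hoi, rfl⟩

lemma Sv_ncard (hk1 : 1 ≤ k) :
    (Sv n k).ncard = ((n / Nat.gcd n k) / 2) * Nat.gcd n k := by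
  rw [Sv_eq hk1, Set.ncard_coe_finset, Finset.card_image_of_injOn, Finset.card_product,
    Finset.card_range, card_odd_range]
  rintro ⟨i, j⟩ hmem ⟨i', j'⟩ hmem' h
  simp only [Finset.mem_coe, Finset.mem_product, Finset.mem_filter, Finset.mem_range] at hmem hmem'
  obtain ⟨h1, h2⟩ := key1 hk1 hmem.1.1 hmem'.1.1 hmem.2 hmem'.2 (Sum.inr.inj h)
  simp [Prod.ext_iff, h1, h2]

lemma SuOdd_ncard {C : ℕ} (hC : 1 ≤ C) (hCn : C ≤ n) :
    (SuOdd n C).ncard = C / 2 + 1 := by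
  have hT : {x : Fin n ⊕ Fin n | ∃ j, j < C ∧ Even j ∧ x = Sum.inl ((j : ℕ) : Fin n)} =
      ↑(((Finset.range C).filter (fun j => Even j)).image
        (fun j => (Sum.inl ((j : ℕ) : Fin n) : Fin n ⊕ Fin n))) := by
    ext x
    simp only [Set.mem_setOf_eq, Finset.coe_image, Set.mem_image, Finset.mem_coe,
      Finset.mem_filter, Finset.mem_range]
    constructor
    · rintro ⟨j, hj, hej, rfl⟩; exact ⟨j, ⟨hj, hej⟩, rfl⟩
    · rintro ⟨j, ⟨hj, hej⟩, rfl⟩; exact ⟨j, hj, hej, rfl⟩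
  have hinj : Set.InjOn (fun j => (Sum.inl ((j : ℕ) : Fin n) : Fin n ⊕ Fin n))
      ↑((Finset.range C).filter (fun j => Even j)) := by
    intro a ha b hb h
    simp only [Finset.coe_filter, Finset.mem_range, Set.mem_setOf_eq] at ha hb
    exact cast_inj_lt (by omega) (by omega) (Sum.inl.inj h)
  have hcard : ((Finset.range C).filter (fun j => Even j)).card = (C + 1) / 2 :=
    card_even_range C
  rw [SuOdd, Set.singleton_union, hT]
  rcases Nat.even_or_odd C with hec | hoc
  · have hnotmem : (Sum.inl ((C - 1 : ℕ) : Fin n) : Fin n ⊕ Fin n) ∉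
        (((Finset.range C).filter (fun j => Even j)).image
          (fun j => (Sum.inl ((j : ℕ) : Fin n) : Fin n ⊕ Fin n)) : Finset (Fin n ⊕ Fin n)) := by
      intro hmem
      obtain ⟨j, hj2, h⟩ := Finset.mem_image.mp hmem
      obtain ⟨hj, hej⟩ := Finset.mem_filter.mp hj2
      have hjr := Finset.mem_range.mp hj
      have := cast_inj_lt (n := n) (by omega) (by omega) (Sum.inl.inj h)
      rcases hej with ⟨r, hr⟩; rcases hec with ⟨s, hs⟩; omega
    rw [Set.ncard_insert_of_notMem (by simpa using hnotmem) (Set.toFinite _),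
      Set.ncard_coe_finset, Finset.card_image_of_injOn hinj, hcard]
    rcases hec with ⟨s, hs⟩; omega
  · have hmem : (Sum.inl ((C - 1 : ℕ) : Fin n) : Fin n ⊕ Fin n) ∈
        (((Finset.range C).filter (fun j => Even j)).image
          (fun j => (Sum.inl ((j : ℕ) : Fin n) : Fin n ⊕ Fin n)) : Finset (Fin n ⊕ Fin n)) := by
      refine Finset.mem_image.mpr ⟨C - 1, Finset.mem_filter.mpr ⟨Finset.mem_range.mpr (by omega), ?_⟩, rfl⟩
      rcases hoc with ⟨s, hs⟩; exact ⟨s, by omega⟩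
    rw [Set.insert_eq_self.mpr (by simpa using hmem), Set.ncard_coe_finset,
      Finset.card_image_of_injOn hinj, hcard]
    rcases hoc with ⟨s, hs⟩; omega

lemma disj_Sv_SuOdd : Disjoint (Sv n k) (SuOdd n (Nat.gcd n k)) := by
  rw [Set.disjoint_left]
  rintro x ⟨i, j, _, _, _, rfl⟩ hx
  rcases hx with h | ⟨j', _, _, h⟩ <;> simp [Set.mem_singleton_iff] at h

lemma final_card (hk1 : 1 ≤ k) (hk2 : 2 * k < n) (hl : Odd (n / Nat.gcd n k)) :
    (Sv n k ∪ SuOdd n (Nat.gcd n k)).ncard = (n + 2) / 2 := by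
  have hcpos := c_pos (n := n) (k := k) hk1
  have hcn := c_le_n (n := n) (k := k) hk1
  rw [Set.ncard_union_eq disj_Sv_SuOdd (Set.toFinite _) (Set.toFinite _),
    Sv_ncard hk1, SuOdd_ncard hcpos hcn]
  obtain ⟨t, ht⟩ := hl
  have hn : n = Nat.gcd n k * (n / Nat.gcd n k) := n_eq_cl
  have hn' : n = 2 * (t * Nat.gcd n k) + Nat.gcd n k := by
    conv_lhs => rw [hn, ht]
    ring
  rw [ht, show (2 * t + 1) / 2 = t by omega]
  omega

end card


theorem stmt7 (n k : ℕ) [NeZero n] (hk1 : 1 ≤ k) (hk2 : 2 * k < n)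
    (hl : Odd (n / Nat.gcd n k)) :
    IsHullSet (genPetersen n k) (Sv n k ∪ SuOdd n (Nat.gcd n k)) ∧
    (Sv n k ∪ SuOdd n (Nat.gcd n k)).ncard = (n + 2) / 2 := by
  exact ⟨hull_main hk1 hk2 hl, final_card hk1 hk2 hl⟩
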